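/- Let g be a complex simple Lie algebra with root system R, highest root ρ, and Killing form ⟨·,·⟩. If v ∈ ⊕_{⟨α|ρ⟩ = -1} g_α satisfies [v,[v,E_ρ]] = c · H_ρ for some c ∈ ℂ, then c = 0, i.e. [v,[v,E_ρ]] = 0. -/
import Mathlib

/-- Let `g` be a complex simple Lie algebra with Killing form `B`, highest root `ρ`,
Killing dual `Hρ` of `ρ` (so `B Hρ Hρ = ⟨ρ,ρ⟩ = r ≠ 0`), and `v` in the sum of
root spaces `g_α` with `⟨α|ρ⟩ = -1` (so `⁅Hρ, v⁆ = -(r/2) • v`).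
If `⁅v, ⁅v, Eρ⁆⁆ = c • Hρ`, then `c = 0`, i.e. `⁅v, ⁅v, Eρ⁆⁆ = 0`. -/
theorem stmt_2 {L : Type*} [LieRing L] [LieAlgebra ℂ L]
    (B : LinearMap.BilinForm ℂ L)
    (hinv : ∀ x y z : L, B ⁅x, y⁆ z = B x ⁅y, z⁆)
    (Hρ Eρ v : L) (r : ℂ) (hr : r ≠ 0)
    (hnorm : B Hρ Hρ = r)
    (hHv : ⁅Hρ, v⁆ = -(r / 2) • v)
    (c : ℂ) (hc : ⁅v, ⁅v, Eρ⁆⁆ = c • Hρ) :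
    c = 0 ∧ ⁅v, ⁅v, Eρ⁆⁆ = 0 := by
  have key : B Hρ ⁅v, ⁅v, Eρ⁆⁆ = 0 := by
    rw [← hinv, hHv]
    have h2 : B v ⁅v, Eρ⁆ = 0 := by
      rw [← hinv, lie_self, map_zero, LinearMap.zero_apply]
    simp [h2]
  rw [hc] at key
  simp only [map_smul, smul_eq_mul, hnorm] at key
  have hc0 : c = 0 := by
    rcases mul_eq_zero.mp key with h | h
    · exact h
    · exact absurd h hr
  exact ⟨hc0, by rw [hc, hc0, zero_smul]⟩
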